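/- In the free left distributive algebra A on one generator x, for every p, q ∈ A there exists n with q <_L p^(n), where p^(0) = p and p^(n+1) = p·p^(n). In particular it suffices to prove p^(n) ≥_L x^(n) for all n, and that for sufficiently large n, x^(n) ≥_L q. -/
import Mathlib


/-- Terms in one generator x with a binary operation ·. -/
inductive LDTerm : Type
  | x : LDTerm
  | mul : LDTerm → LDTerm → LDTerm

/-- The congruence generated by the left distributive law. -/
inductive LDEq : LDTerm → LDTerm → Prop
  | ld (a b c : LDTerm) :
      LDEq (LDTerm.mul a (LDTerm.mul b c)) (LDTerm.mul (LDTerm.mul a b) (LDTerm.mul a c))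
  | refl (a : LDTerm) : LDEq a a
  | symm {a b : LDTerm} : LDEq a b → LDEq b a
  | trans {a b c : LDTerm} : LDEq a b → LDEq b c → LDEq a c
  | congr {a b c d : LDTerm} : LDEq a b → LDEq c d → LDEq (LDTerm.mul a c) (LDTerm.mul b d)

instance LDTerm.setoid : Setoid LDTerm :=
  ⟨LDEq, LDEq.refl, LDEq.symm, LDEq.trans⟩

/-- The free left distributive algebra on one generator. -/
def FreeLD : Type := Quotient LDTerm.setoid

/-- The generator x of the free left distributive algebra. -/
def FreeLD.x : FreeLD := ⟦LDTerm.x⟧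

/-- Multiplication on the free left distributive algebra. -/
def FreeLD.mul : FreeLD → FreeLD → FreeLD :=
  Quotient.map₂ LDTerm.mul fun _ _ h _ _ h' => LDEq.congr h h'

/-- a <_L b : b = a·c₀·c₁·...·c_n (left association) for some n ≥ 0. -/
def FreeLD.ltL (a b : FreeLD) : Prop :=
  ∃ (c : FreeLD) (l : List FreeLD), b = List.foldl FreeLD.mul (FreeLD.mul a c) l

/-- Iterated dot powers: p^(0) = p, p^(n+1) = p·p^(n). -/
def FreeLD.dotPow (p : FreeLD) : ℕ → FreeLD
  | 0 => p
  | n + 1 => FreeLD.mul p (FreeLD.dotPow p n)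

namespace FreeLD

lemma mk_mul (a b : LDTerm) : FreeLD.mul ⟦a⟧ ⟦b⟧ = ⟦a.mul b⟧ := rfl

lemma ld_law (a b c : FreeLD) : mul a (mul b c) = mul (mul a b) (mul a c) := by
  induction a using Quotient.ind
  induction b using Quotient.ind
  induction c using Quotient.ind
  exact Quotient.sound (LDEq.ld _ _ _)

/-- The reflexive closure of `ltL`. -/
def leL (a b : FreeLD) : Prop := a = b ∨ ltL a b

lemma ltL_mul (a c : FreeLD) : ltL a (mul a c) := ⟨c, [], rfl⟩

lemma leL.ltL_mul_right {a b : FreeLD} (h : leL a b) (c : FreeLD) : ltL a (mul b c) := by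
  rcases h with rfl | ⟨d, l, rfl⟩
  · exact ltL_mul a c
  · exact ⟨d, l ++ [c], by simp [List.foldl_append]⟩

lemma mul_foldl (a z : FreeLD) (l : List FreeLD) :
    mul a (List.foldl mul z l) = List.foldl mul (mul a z) (l.map (mul a)) := by
  induction l generalizing z with
  | nil => rfl
  | cons e l ih =>
      simp only [List.foldl, List.map]
      rw [ih, ld_law]

lemma ltL.mul_left {b c : FreeLD} (h : ltL b c) (a : FreeLD) : ltL (mul a b) (mul a c) := by
  obtain ⟨d, l, rfl⟩ := h
  exact ⟨mul a d, l.map (mul a), by rw [mul_foldl, ld_law]⟩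

lemma leL.mul_left {b c : FreeLD} (h : leL b c) (a : FreeLD) : leL (mul a b) (mul a c) := by
  rcases h with rfl | h
  · exact Or.inl rfl
  · exact Or.inr (h.mul_left a)

lemma dotPow_mul (u v : FreeLD) : ∀ n, dotPow (mul u v) n = mul u (dotPow v n)
  | 0 => rfl
  | n + 1 => by
      show mul (mul u v) (dotPow (mul u v) n) = mul u (mul v (dotPow v n))
      rw [dotPow_mul u v n, ← ld_law]

/-- A term representative of x^(n). -/
def xIter : ℕ → LDTerm
  | 0 => LDTerm.x
  | n + 1 => LDTerm.x.mul (xIter n)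

/-- Height of a term. -/
def ht : LDTerm → ℕ
  | LDTerm.x => 0
  | LDTerm.mul u v => max (ht u) (ht v) + 1

lemma xpow_eq : ∀ n : ℕ, dotPow FreeLD.x n = ⟦xIter n⟧
  | 0 => rfl
  | n + 1 => by
      show mul FreeLD.x (dotPow FreeLD.x n) = ⟦xIter (n + 1)⟧
      rw [xpow_eq n]
      rfl

lemma ht_xIter : ∀ n : ℕ, ht (xIter n) = n
  | 0 => rfl
  | n + 1 => by
      show max (ht LDTerm.x) (ht (xIter n)) + 1 = n + 1
      rw [ht_xIter n]
      simp [ht]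

/-- Absorption: if n ≥ height t then t · x^(n) = x^(n+1). -/
lemma absorb : ∀ (t : LDTerm) (n : ℕ), ht t ≤ n →
    mul ⟦t⟧ (dotPow FreeLD.x n) = dotPow FreeLD.x (n + 1)
  | LDTerm.x, n, _ => rfl
  | LDTerm.mul u v, n, hn => by
      have h1 : max (ht u) (ht v) + 1 ≤ n := hn
      obtain ⟨m, rfl⟩ : ∃ m, n = m + 1 := ⟨n - 1, by omega⟩
      have hu : ht u ≤ m := by omega
      have hv : ht v ≤ m := by omega
      have hu' : ht u ≤ m + 1 := by omega
      calc mul ⟦LDTerm.mul u v⟧ (dotPow FreeLD.x (m + 1))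
          = mul (mul ⟦u⟧ ⟦v⟧) (mul ⟦u⟧ (dotPow FreeLD.x m)) := by
            rw [absorb u m hu]; rfl
        _ = mul ⟦u⟧ (mul ⟦v⟧ (dotPow FreeLD.x m)) := (ld_law _ _ _).symm
        _ = mul ⟦u⟧ (dotPow FreeLD.x (m + 1)) := by rw [absorb v m hv]
        _ = dotPow FreeLD.x (m + 2) := absorb u (m + 1) hu'

lemma xpow_lt_succ (n : ℕ) : ltL (dotPow FreeLD.x n) (dotPow FreeLD.x (n + 1)) := by
  have h := absorb (xIter n) n (le_of_eq (ht_xIter n))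
  rw [← xpow_eq n] at h
  rw [← h]
  exact ltL_mul _ _

lemma xpow_le (htrans : ∀ a b c : FreeLD, ltL a b → ltL b c → ltL a c)
    {m n : ℕ} (h : m ≤ n) : leL (dotPow FreeLD.x m) (dotPow FreeLD.x n) := by
  induction n with
  | zero =>
      have : m = 0 := Nat.le_zero.mp h
      subst this; exact Or.inl rfl
  | succ n ih =>
      rcases Nat.lt_or_ge m (n + 1) with hlt | hge
      · have := ih (by omega)
        rcases this with heq | hlt'
        · rw [heq]; exact Or.inr (xpow_lt_succ n)
        · exact Or.inr (htrans _ _ _ hlt' (xpow_lt_succ n))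
      · have : m = n + 1 := by omega
        subst this; exact Or.inl rfl

/-- For every term t and every g there is N with x^(g) ≤ t^(N). -/
lemma xpow_le_dotPow (htrans : ∀ a b c : FreeLD, ltL a b → ltL b c → ltL a c) :
    ∀ (t : LDTerm) (g : ℕ), ∃ N : ℕ, leL (dotPow FreeLD.x g) (dotPow ⟦t⟧ N)
  | LDTerm.x, g => ⟨g, Or.inl rfl⟩
  | LDTerm.mul u v, g => by
      set g' := max g (ht u) with hg'
      obtain ⟨N, hN⟩ := xpow_le_dotPow htrans v g'
      refine ⟨N, ?_⟩
      have habs : mul ⟦u⟧ (dotPow FreeLD.x g') = dotPow FreeLD.x (g' + 1) :=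
        absorb u g' (le_max_right _ _)
      have hmono : leL (mul ⟦u⟧ (dotPow FreeLD.x g')) (mul ⟦u⟧ (dotPow ⟦v⟧ N)) :=
        hN.mul_left ⟦u⟧
      rw [habs] at hmono
      have hrw : dotPow (⟦LDTerm.mul u v⟧ : FreeLD) N = mul ⟦u⟧ (dotPow ⟦v⟧ N) := by
        rw [← mk_mul]; exact dotPow_mul ⟦u⟧ ⟦v⟧ N
      rw [hrw]
      have hle : leL (dotPow FreeLD.x g) (dotPow FreeLD.x (g' + 1)) :=
        xpow_le htrans (by omega)
      rcases hle with heq | hlt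
      · rw [heq]; exact hmono
      · rcases hmono with heq' | hlt'
        · rw [← heq']; exact Or.inr hlt
        · exact Or.inr (htrans _ _ _ hlt hlt')

end FreeLD

/-- Theorem 1(iii): assuming <_L is a (strict) linear order on the free left
distributive algebra, for all p, q there is an n with q <_L p^(n). -/
theorem FreeLD.exists_dotPow_gt
    (hirr : ∀ a : FreeLD, ¬ FreeLD.ltL a a)
    (htrans : ∀ a b c : FreeLD, FreeLD.ltL a b → FreeLD.ltL b c → FreeLD.ltL a c)
    (htri : ∀ a b : FreeLD, FreeLD.ltL a b ∨ a = b ∨ FreeLD.ltL b a) :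
    ∀ p q : FreeLD, ∃ n : ℕ, FreeLD.ltL q (FreeLD.dotPow p n) := by
  intro p q
  induction p using Quotient.ind with | _ t =>
  induction q using Quotient.ind with | _ s =>
  -- q <_L x^(ht s + 1) by absorption
  have habs : FreeLD.mul ⟦s⟧ (FreeLD.dotPow FreeLD.x (FreeLD.ht s))
      = FreeLD.dotPow FreeLD.x (FreeLD.ht s + 1) := FreeLD.absorb s _ le_rfl
  have hq : FreeLD.ltL ⟦s⟧ (FreeLD.dotPow FreeLD.x (FreeLD.ht s + 1)) := by
    rw [← habs]; exact FreeLD.ltL_mul _ _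
  obtain ⟨N, hN⟩ := FreeLD.xpow_le_dotPow htrans t (FreeLD.ht s + 1)
  refine ⟨N, ?_⟩
  rcases hN with heq | hlt
  · rw [← heq]; exact hq
  · exact htrans _ _ _ hq hlt
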